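/- The map τ: Bl_E(S) → ℙ³(ℝ) × ℙ³(ℝ), ([x,y],[w]) ↦ ([w],[r,s,t,u]) with r = Σᵢ wᵢxᵢ, s = 2(−w₁y₀ + w₀y₁ − w₃y₂ + w₂y₃), t = 2(−w₂y₀ + w₃y₁ + w₀y₂ − w₁y₃), u = 2(−w₃y₀ − w₂y₁ + w₁y₂ + w₀y₃), is well-defined on Bl_E(S): the quadruple (r,s,t,u) never vanishes identically on Bl_E(S). -/
import Mathlib


/-- The defining conditions of `Bl_E(S) ⊂ ℙ⁷(ℝ) × ℙ³(ℝ)`, on homogeneous coordinates. -/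
def inBl (x y w : Fin 4 → ℝ) : Prop :=
  (∑ i : Fin 4, x i * y i = 0) ∧ (∑ i : Fin 4, y i * w i = 0) ∧
    ∀ i j : Fin 4, x i * w j = x j * w i

/-- The quadruple `(r, s, t, u)` of `τ([x, y], [w])`. -/
def tauP (x y w : Fin 4 → ℝ) : Fin 4 → ℝ :=
  ![w 0 * x 0 + w 1 * x 1 + w 2 * x 2 + w 3 * x 3,
    2 * (-(w 1 * y 0) + w 0 * y 1 - w 3 * y 2 + w 2 * y 3),
    2 * (-(w 2 * y 0) + w 3 * y 1 + w 0 * y 2 - w 1 * y 3),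
    2 * (-(w 3 * y 0) - w 2 * y 1 + w 1 * y 2 + w 0 * y 3)]

/-- `τ` is well-defined on `Bl_E(S)`: the quadruple `(r, s, t, u)` never vanishes there. -/
theorem stmt16 (x y w : Fin 4 → ℝ) (h : inBl x y w) (hxy : ¬(x = 0 ∧ y = 0))
    (hw : w ≠ 0) : tauP x y w ≠ 0 := by
  intro h0
  obtain ⟨h1, h2, h3⟩ := h
  rw [Fin.sum_univ_four] at h2
  have hr := congrFun h0 0
  have hs := congrFun h0 1
  have ht := congrFun h0 2
  have hu := congrFun h0 3
  simp only [tauP, Matrix.cons_val_zero, Matrix.cons_val_one, Matrix.head_cons,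
    Matrix.cons_val_two, Matrix.tail_cons, Matrix.cons_val_three, Pi.zero_apply] at hr hs ht hu
  have hW : w 0 * w 0 + w 1 * w 1 + w 2 * w 2 + w 3 * w 3 ≠ 0 := by
    intro heq
    apply hw
    funext i
    have n0 := mul_self_nonneg (w 0)
    have n1 := mul_self_nonneg (w 1)
    have n2 := mul_self_nonneg (w 2)
    have n3 := mul_self_nonneg (w 3)
    fin_cases i
    · show w 0 = 0; exact mul_self_eq_zero.mp (by linarith)
    · show w 1 = 0; exact mul_self_eq_zero.mp (by linarith)
    · show w 2 = 0; exact mul_self_eq_zero.mp (by linarith)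
    · show w 3 = 0; exact mul_self_eq_zero.mp (by linarith)
  have key : ∀ z : ℝ, (w 0 * w 0 + w 1 * w 1 + w 2 * w 2 + w 3 * w 3) * z = 0 → z = 0 := by
    intro z hz
    exact (mul_eq_zero.mp hz).resolve_left hW
  apply hxy
  constructor
  · funext i
    have hx : (w 0 * w 0 + w 1 * w 1 + w 2 * w 2 + w 3 * w 3) * x i = 0 := by
      linear_combination (w 0) * h3 i 0 + (w 1) * h3 i 1 + (w 2) * h3 i 2 + (w 3) * h3 i 3
        + (w i) * hr
    exact key _ hx
  · funext i
    fin_cases i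
    · exact key (y 0) (by linear_combination (w 0) * h2 - (w 1 / 2) * hs - (w 2 / 2) * ht - (w 3 / 2) * hu)
    · exact key (y 1) (by linear_combination (w 1) * h2 + (w 0 / 2) * hs + (w 3 / 2) * ht - (w 2 / 2) * hu)
    · exact key (y 2) (by linear_combination (w 2) * h2 - (w 3 / 2) * hs + (w 0 / 2) * ht + (w 1 / 2) * hu)
    · exact key (y 3) (by linear_combination (w 3) * h2 + (w 2 / 2) * hs - (w 1 / 2) * ht + (w 0 / 2) * hu)
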